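/- Let a,b,S be complex numbers with S^2 = b^2 - 4a + 4a^2, a\ne 1, b\ne 0, b\ne -1, and set w = (b+S)/(2b) and t = (2-2a-b^2+bS)/(2(1-a)(1+b)). Assume t\ne 0, t\ne 1, w\ne 0, w\ne 1, and 1-(1-t)w\ne 0. Then both -b/(1-t) + (1-b)/t + b\,w/(1-(1-t)w) = 0 and a/w - a/(w-1) - b(1-t)/(1-(1-t)w) = 0. (Replacing S by -S gives the same conclusion for the other pair (t_-,w_-).) -/

import Mathlib

/-- `(t₊, w₊)` with `w₊ = (b+S)/(2b)`, `t₊ = (2-2a-b²+bS)/(2(1-a)(1+b))`,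
`S² = b² - 4a + 4a²`, is a critical point of the phase function
`f(t,w) = b ln(1-t) + (1-b) ln t + a ln w - a ln(w-1) + b ln[1-(1-t)w]`. -/
theorem critical_point (a b S : ℂ) (hS : S ^ 2 = b ^ 2 - 4 * a + 4 * a ^ 2)
    (ha : a ≠ 1) (hb0 : b ≠ 0) (hb1 : b ≠ -1)
    (w t : ℂ) (hw : w = (b + S) / (2 * b))
    (ht : t = (2 - 2 * a - b ^ 2 + b * S) / (2 * (1 - a) * (1 + b)))
    (ht0 : t ≠ 0) (ht1 : t ≠ 1) (hw0 : w ≠ 0) (hw1 : w ≠ 1)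
    (hq : 1 - (1 - t) * w ≠ 0) :
    -b / (1 - t) + (1 - b) / t + b * w / (1 - (1 - t) * w) = 0 ∧
    a / w - a / (w - 1) - b * (1 - t) / (1 - (1 - t) * w) = 0 := by
  have ha1 : (1:ℂ) - a ≠ 0 := sub_ne_zero.mpr (Ne.symm ha)
  have hb1' : (1:ℂ) + b ≠ 0 := by
    intro h; apply hb1; linear_combination h
  have ht1' : (1:ℂ) - t ≠ 0 := sub_ne_zero.mpr (Ne.symm ht1)
  have hw1' : w - 1 ≠ 0 := sub_ne_zero.mpr hw1
  -- key polynomial relations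
  have E1 : b ^ 2 * w * (w - 1) = a * (a - 1) := by
    subst hw; field_simp; ring_nf; linear_combination hS
  have E2 : (1 - a) * (1 + b) * t = (1 - a) + b ^ 2 * (w - 1) := by
    subst hw ht; field_simp; ring
  -- first equation, cleared of denominators
  have key1 : -b * t * (1 - (1 - t) * w) + (1 - b) * (1 - t) * (1 - (1 - t) * w)
      + b * w * t * (1 - t) = 0 := by
    have h : b * ((1 - a) * (1 + b)) ^ 2 *
        (-b * t * (1 - (1 - t) * w) + (1 - b) * (1 - t) * (1 - (1 - t) * w)
          + b * w * t * (1 - t)) = 0 := by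
      linear_combination
        (b * (b * (1 + b - a - b * w) - b * ((1 - a) + b ^ 2 * (w - 1)))) * E1 +
        (b * (-b * (((1 - a) + b ^ 2 * (w - 1)) * w + ((1 - a) * (1 + b) - b * (1 + b - a - b * w) * w))
          + (1 - b) * (b * (1 + b - a - b * w) * w - ((1 - a) * (1 + b) - b * (1 + b - a - b * w) * w))
          + b * w * (b * (1 + b - a - b * w) - ((1 - a) + b ^ 2 * (w - 1))))
          - b * w * (1 + b) * ((1 - a) * (1 + b) * t - ((1 - a) + b ^ 2 * (w - 1)))) * E2
    rcases mul_eq_zero.mp h with h' | h''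
    · rcases mul_eq_zero.mp h' with h'' | h''
      · exact absurd h'' hb0
      · exact absurd (pow_eq_zero_iff (by norm_num)|>.mp h'')
          (mul_ne_zero ha1 hb1')
    · exact h''
  -- second equation, cleared of denominators
  have key2 : a * (1 - (1 - t) * w) + b * (1 - t) * w * (w - 1) = 0 := by
    have h : (1 - a) * (1 + b) *
        (a * (1 - (1 - t) * w) + b * (1 - t) * w * (w - 1)) = 0 := by
      linear_combination (1 + b - b * w) * E1 + (- w * (b * w - b - a)) * E2
    rcases mul_eq_zero.mp h with h' | h''
    · exact absurd h' (mul_ne_zero ha1 hb1')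
    · exact h''
  constructor
  · field_simp
    linear_combination key1
  · rw [sub_eq_zero, div_sub_div _ _ hw0 hw1', div_eq_div_iff (mul_ne_zero hw0 hw1') hq]
    linear_combination (-1 : ℂ) * key2
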